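/- Theorem 1, Part 2 (BER invariance): In the setting of the syndrome-based decoder, let H be an r × N matrix over ZMod 2, F : (Fin N → ℝ) × (Fin r → ZMod 2) → (Fin N → ℝ), and D(y) := sign(y) * F(|y|, H · bin(sign(y))) for vectors y with nonzero components. Let x^b satisfy H · x^b = 0, x = bipolar(x^b), and let z : Fin N → ℝ have nonzero components; assume moreover F(|z|, H · bin(sign(z)))_i ≠ 0 for every i. Then the set of bit-error indices { i : sign(D(x * z)_i) ≠ x_i } equals { i : sign(D(z)_i) ≠ 1 }, and in particular does not depend on the transmitted codeword x. -/

import Mathlib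

/-- The bipolar map: `0 ↦ 1`, `1 ↦ −1`. -/
noncomputable def bipolar (b : ZMod 2) : ℝ := if b = 0 then 1 else -1

/-- Sign of a real number: `1` if positive, `−1` otherwise (only used on
nonzero reals). -/
noncomputable def sgn (t : ℝ) : ℝ := if 0 < t then 1 else -1

/-- The inverse of the bipolar map: `bin 1 = 0`, `bin (-1) = 1`. -/
noncomputable def bin (t : ℝ) : ZMod 2 := if t = 1 then 0 else 1

lemma bipolar_cases (b : ZMod 2) : bipolar b = 1 ∨ bipolar b = -1 := by
  unfold bipolar; split <;> simp

lemma bipolar_ne_zero (b : ZMod 2) : bipolar b ≠ 0 := by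
  rcases bipolar_cases b with h | h <;> rw [h] <;> norm_num

lemma sgn_pos {t : ℝ} (h : 0 < t) : sgn t = 1 := if_pos h
lemma sgn_neg {t : ℝ} (h : t < 0) : sgn t = -1 := if_neg (not_lt.2 h.le)

lemma sgn_bipolar_mul (b : ZMod 2) (t : ℝ) (ht : t ≠ 0) :
    sgn (bipolar b * t) = bipolar b * sgn t := by
  rcases lt_trichotomy t 0 with h' | h' | h'
  · rcases bipolar_cases b with h | h <;> rw [h]
    · rw [one_mul, one_mul]
    · rw [sgn_neg h', sgn_pos (by nlinarith)]; ring
  · exact absurd h' ht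
  · rcases bipolar_cases b with h | h <;> rw [h]
    · rw [one_mul, one_mul]
    · rw [sgn_pos h', sgn_neg (by nlinarith)]; ring

lemma zmod2_cases (b : ZMod 2) : b = 0 ∨ b = 1 := by
  revert b; decide

lemma bin_sgn_bipolar_mul (b : ZMod 2) (t : ℝ) (ht : t ≠ 0) :
    bin (sgn (bipolar b * t)) = b + bin (sgn t) := by
  rw [sgn_bipolar_mul b t ht]
  rcases lt_trichotomy t 0 with h' | h' | h'
  · rw [sgn_neg h']
    rcases zmod2_cases b with hb | hb <;> subst hb <;>
      simp [bipolar, bin, show ¬(-1:ℝ)=1 by norm_num] <;> decide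
  · exact absurd h' ht
  · rw [sgn_pos h']
    rcases zmod2_cases b with hb | hb <;> subst hb <;>
      simp [bipolar, bin, show ¬(-1:ℝ)=1 by norm_num] <;> decide

/-- Theorem 1, Part 2 (BER invariance): for the syndrome-based decoder
`D(y) = sign(y) * F(|y|, H · bin(sign(y)))`, the set of bit-error indices
`{i : sign(D(x*z)_i) ≠ x_i}` equals `{i : sign(D(z)_i) ≠ 1}` and hence does
not depend on the transmitted codeword `x`. -/
theorem ber_invariant_to_codeword (r N : ℕ)
    (H : Matrix (Fin r) (Fin N) (ZMod 2))
    (F : (Fin N → ℝ) → (Fin r → ZMod 2) → (Fin N → ℝ))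
    (D : (Fin N → ℝ) → (Fin N → ℝ))
    (hD : ∀ y, D y = fun i =>
      sgn (y i) * F (fun j => |y j|) (H.mulVec (fun j => bin (sgn (y j)))) i)
    (xb : Fin N → ZMod 2) (hxb : H.mulVec xb = 0)
    (z : Fin N → ℝ) (hz : ∀ i, z i ≠ 0)
    (hF : ∀ i, F (fun j => |z j|) (H.mulVec (fun j => bin (sgn (z j)))) i ≠ 0) :
    {i | sgn (D (fun j => bipolar (xb j) * z j) i) ≠ bipolar (xb i)} =
      {i | sgn (D z i) ≠ 1} := by
  have habs : (fun j => |bipolar (xb j) * z j|) = fun j => |z j| := by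
    funext j
    rw [abs_mul]
    rcases bipolar_cases (xb j) with h | h <;> rw [h] <;> simp
  have hsyn : (H.mulVec fun j => bin (sgn (bipolar (xb j) * z j))) =
      H.mulVec fun j => bin (sgn (z j)) := by
    have : (fun j => bin (sgn (bipolar (xb j) * z j))) =
        xb + fun j => bin (sgn (z j)) := by
      funext j; exact bin_sgn_bipolar_mul (xb j) (z j) (hz j)
    rw [this, Matrix.mulVec_add, hxb, zero_add]
  have key : ∀ i, D (fun j => bipolar (xb j) * z j) i = bipolar (xb i) * D z i := by
    intro i
    rw [hD, hD]
    simp only [habs, hsyn, sgn_bipolar_mul (xb i) (z i) (hz i)]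
    ring
  ext i
  simp only [Set.mem_setOf_eq, key i]
  have hDz : D z i ≠ 0 := by
    rw [hD]
    refine mul_ne_zero ?_ (hF i)
    unfold sgn; split <;> norm_num
  rw [sgn_bipolar_mul (xb i) (D z i) hDz]
  constructor
  · intro h h'; exact h (by rw [h', mul_one])
  · intro h h'; exact h (mul_left_cancel₀ (bipolar_ne_zero (xb i)) (by rw [h', mul_one]))
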